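/- Let (X, 𝓑, μ) be a standard Borel space with a nonatomic Borel probability measure μ, and let T be an aperiodic μ-preserving Borel automorphism of X. Then for every integer n ≥ 1 and every ε > 0 there exists a Borel set A ⊆ X such that the sets A, T(A), …, T^{n-1}(A) are pairwise disjoint and μ(X ∖ (A ∪ T(A) ∪ ⋯ ∪ T^{n-1}(A))) < ε. -/

import Mathlib

open MeasureTheory


open MeasureTheory Set Function
open scoped ENNReal

namespace RokhlinAux

variable {X : Type*} [MeasurableSpace X]

/-- The (two-sided) orbit saturation of a set. -/
def sat (T : X ≃ᵐ X) (E : Set X) : Set X :=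
  ⋃ k : ℕ, ((⇑T)^[k] ⁻¹' E ∪ (⇑T.symm)^[k] ⁻¹' E)

lemma symm_it (T : X ≃ᵐ X) (k : ℕ) (x : X) : (⇑T.symm)^[k] ((⇑T)^[k] x) = x :=
  (Function.LeftInverse.iterate T.symm_apply_apply k) x

lemma it_symm (T : X ≃ᵐ X) (k : ℕ) (x : X) : (⇑T)^[k] ((⇑T.symm)^[k] x) = x :=
  (Function.LeftInverse.iterate T.apply_symm_apply k) x

lemma symm_it_it (T : X ≃ᵐ X) {a b : ℕ} (h : b ≤ a) (x : X) :
    (⇑T.symm)^[a] ((⇑T)^[b] x) = (⇑T.symm)^[a - b] x := by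
  conv_lhs => rw [show a = (a - b) + b from (Nat.sub_add_cancel h).symm]
  rw [Function.iterate_add_apply, symm_it]

lemma it_symm_it (T : X ≃ᵐ X) {a b : ℕ} (h : b ≤ a) (x : X) :
    (⇑T)^[a] ((⇑T.symm)^[b] x) = (⇑T)^[a - b] x := by
  conv_lhs => rw [show a = (a - b) + b from (Nat.sub_add_cancel h).symm]
  rw [Function.iterate_add_apply, it_symm]

lemma it_symm_it' (T : X ≃ᵐ X) {a b : ℕ} (h : a ≤ b) (x : X) :
    (⇑T)^[a] ((⇑T.symm)^[b] x) = (⇑T.symm)^[b - a] x := by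
  conv_lhs => rw [show b = a + (b - a) from (Nat.add_sub_cancel' h).symm,
    Function.iterate_add_apply, it_symm]

lemma symm_it_it' (T : X ≃ᵐ X) {a b : ℕ} (h : a ≤ b) (x : X) :
    (⇑T.symm)^[a] ((⇑T)^[b] x) = (⇑T)^[b - a] x := by
  conv_lhs => rw [show b = a + (b - a) from (Nat.add_sub_cancel' h).symm,
    Function.iterate_add_apply, symm_it]

lemma mem_sat {T : X ≃ᵐ X} {E : Set X} {x : X} :
    x ∈ sat T E ↔ ∃ k : ℕ, (⇑T)^[k] x ∈ E ∨ (⇑T.symm)^[k] x ∈ E := by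
  simp [sat]

lemma subset_sat {T : X ≃ᵐ X} {E : Set X} : E ⊆ sat T E := fun x hx =>
  mem_sat.2 ⟨0, Or.inl hx⟩

lemma sat_mono {T : X ≃ᵐ X} {E E' : Set X} (h : E ⊆ E') : sat T E ⊆ sat T E' := by
  intro x hx
  obtain ⟨k, hk⟩ := mem_sat.1 hx
  exact mem_sat.2 ⟨k, hk.imp (fun h' => h h') (fun h' => h h')⟩

lemma measurableSet_sat (T : X ≃ᵐ X) {E : Set X} (hE : MeasurableSet E) :
    MeasurableSet (sat T E) :=
  MeasurableSet.iUnion fun k => ((T.measurable.iterate k) hE).union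
    ((T.symm.measurable.iterate k) hE)

lemma mem_sat_of_it {T : X ≃ᵐ X} {E : Set X} {x : X} {i : ℕ} (hx : x ∈ E) :
    (⇑T)^[i] x ∈ sat T E :=
  mem_sat.2 ⟨i, Or.inr (by rw [symm_it]; exact hx)⟩

lemma mem_sat_of_it' {T : X ≃ᵐ X} {E : Set X} {x : X} {i : ℕ} (hx : (⇑T)^[i] x ∈ E) :
    x ∈ sat T E :=
  mem_sat.2 ⟨i, Or.inl hx⟩

lemma apply_mem_sat {T : X ≃ᵐ X} {E : Set X} {x : X} (hx : x ∈ sat T E) :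
    T x ∈ sat T E := by
  obtain ⟨k, hk | hk⟩ := mem_sat.1 hx
  · rcases k with _ | k
    · exact mem_sat.2 ⟨1, Or.inr (by simpa using hk)⟩
    · exact mem_sat.2 ⟨k, Or.inl (by rw [← Function.iterate_succ_apply]; exact hk)⟩
  · exact mem_sat.2 ⟨k + 1, Or.inr (by
      rw [Function.iterate_succ_apply, T.symm_apply_apply]; exact hk)⟩

lemma symm_apply_mem_sat {T : X ≃ᵐ X} {E : Set X} {x : X} (hx : x ∈ sat T E) :
    T.symm x ∈ sat T E := by
  obtain ⟨k, hk | hk⟩ := mem_sat.1 hx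
  · exact mem_sat.2 ⟨k + 1, Or.inl (by
      rw [Function.iterate_succ_apply, T.apply_symm_apply]; exact hk)⟩
  · rcases k with _ | k
    · exact mem_sat.2 ⟨1, Or.inl (by simpa using hk)⟩
    · exact mem_sat.2 ⟨k, Or.inr (by rw [← Function.iterate_succ_apply]; exact hk)⟩

lemma it_mem_sat {T : X ≃ᵐ X} {E : Set X} {x : X} (hx : x ∈ sat T E) (k : ℕ) :
    (⇑T)^[k] x ∈ sat T E := by
  induction k with
  | zero => exact hx
  | succ k ih => rw [Function.iterate_succ_apply']; exact apply_mem_sat ih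

lemma symm_it_mem_sat {T : X ≃ᵐ X} {E : Set X} {x : X} (hx : x ∈ sat T E) (k : ℕ) :
    (⇑T.symm)^[k] x ∈ sat T E := by
  induction k with
  | zero => exact hx
  | succ k ih => rw [Function.iterate_succ_apply']; exact symm_apply_mem_sat ih

lemma sat_subset_compl_sat {T : X ≃ᵐ X} {E U : Set X} (h : E ⊆ (sat T U)ᶜ) :
    sat T E ⊆ (sat T U)ᶜ := by
  intro z hz hzU
  obtain ⟨k, hk | hk⟩ := mem_sat.1 hz
  · exact h hk (it_mem_sat hzU k)
  · exact h hk (symm_it_mem_sat hzU k)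

/-- Inside any set of positive measure there is a positive-measure subset `E` with
`E, T E, …, T^{N-1} E` disjoint. -/
lemma exists_disjointish [StandardBorelSpace X] (μ : Measure X) (T : X ≃ᵐ X)
    (hap : μ {x : X | ∃ n : ℕ, 1 ≤ n ∧ (⇑T)^[n] x = x} = 0)
    (N : ℕ) {R : Set X} (hRm : MeasurableSet R) (hR : μ R ≠ 0) :
    ∃ E : Set X, MeasurableSet E ∧ E ⊆ R ∧ μ E ≠ 0 ∧
      ∀ i : ℕ, 1 ≤ i → i < N → ∀ x ∈ E, (⇑T)^[i] x ∉ E := by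
  obtain ⟨f, hfm, hfi⟩ :=
    MeasurableSpace.measurable_injection_nat_bool_of_countablySeparated X
  set Ω : Set X := {x : X | ∃ n : ℕ, 1 ≤ n ∧ (⇑T)^[n] x = x} with hΩ
  set D : (Fin N → ℕ × Bool) → Set X := fun φ =>
    (R \ Ω) ∩ ⋂ (i : Fin N), ⋂ (_ : 1 ≤ (i : ℕ)),
      ({y | f y (φ i).1 = (φ i).2} ∩ {y | ¬ f ((⇑T)^[(i : ℕ)] y) (φ i).1 = (φ i).2})
    with hD
  have hcover : R \ Ω ⊆ ⋃ φ, D φ := by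
    intro x hx
    have hxa : ∀ i : ℕ, 1 ≤ i → (⇑T)^[i] x ≠ x := fun i h1 he => hx.2 ⟨i, h1, he⟩
    have hch : ∀ i : Fin N, ∃ p : ℕ × Bool,
        1 ≤ (i : ℕ) → (f x p.1 = p.2 ∧ ¬ f ((⇑T)^[(i : ℕ)] x) p.1 = p.2) := by
      intro i
      by_cases h1 : 1 ≤ (i : ℕ)
      · have hne : f ((⇑T)^[(i : ℕ)] x) ≠ f x := fun h => hxa _ h1 (hfi h)
        obtain ⟨m, hm⟩ := Function.ne_iff.1 hne
        exact ⟨(m, f x m), fun _ => ⟨rfl, hm⟩⟩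
      · exact ⟨(0, true), fun h => absurd h h1⟩
    choose φ hφ using hch
    refine mem_iUnion.2 ⟨φ, hx, ?_⟩
    simp only [mem_iInter, mem_inter_iff, mem_setOf_eq]
    intro i h1
    exact (hφ i h1)
  have hΩm : MeasurableSet Ω := by
    have he : Ω = ⋃ (i : ℕ), ⋃ (_ : 1 ≤ i), ⋂ (m : ℕ),
        {x | f ((⇑T)^[i] x) m = f x m} := by
      ext x
      simp only [hΩ, mem_iUnion, mem_iInter, mem_setOf_eq]
      constructor
      · rintro ⟨i, h1, he⟩; exact ⟨i, h1, fun m => by rw [he]⟩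
      · rintro ⟨i, h1, he⟩; exact ⟨i, h1, hfi (funext he)⟩
    rw [he]
    refine MeasurableSet.iUnion fun i => MeasurableSet.iUnion fun _ =>
      MeasurableSet.iInter fun m => measurableSet_eq_fun ?_ ?_
    · exact (measurable_pi_apply m).comp (hfm.comp (T.measurable.iterate i))
    · exact (measurable_pi_apply m).comp hfm
  have hDm : ∀ φ, MeasurableSet (D φ) := by
    intro φ
    refine (hRm.diff hΩm).inter (MeasurableSet.iInter fun i =>
      MeasurableSet.iInter fun _ => MeasurableSet.inter ?_ ?_)
    · exact ((measurable_pi_apply (φ i).1).comp hfm) (measurableSet_singleton (φ i).2)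
    · exact (((measurable_pi_apply (φ i).1).comp
        (hfm.comp (T.measurable.iterate (i : ℕ)))) (measurableSet_singleton (φ i).2)).compl
  have hRΩ : μ (R \ Ω) ≠ 0 := by
    intro h0
    apply hR
    have : μ R ≤ μ (R \ Ω) + μ Ω := by
      refine (measure_mono (fun x hx => ?_)).trans (measure_union_le _ _)
      by_cases hxo : x ∈ Ω
      · exact Or.inr hxo
      · exact Or.inl ⟨hx, hxo⟩
    simpa [h0, hap] using this
  have hex : ∃ φ, μ (D φ) ≠ 0 := by
    by_contra h
    push_neg at h
    exact hRΩ (measure_mono_null hcover (measure_iUnion_null h))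
  obtain ⟨φ, hφ0⟩ := hex
  refine ⟨D φ, hDm φ, fun x hx => hx.1.1, hφ0, ?_⟩
  intro i h1 hiN x hx hx'
  have h2 := (mem_iInter.1 (mem_iInter.1 hx.2 ⟨i, hiN⟩) h1).2
  have h3 := (mem_iInter.1 (mem_iInter.1 hx'.2 ⟨i, hiN⟩) h1).1
  exact h2 h3

/-- The exhaustion argument: there is a measurable set `B` with `B, T B, …, T^{N-1} B`
disjoint whose saturation is conull. -/
lemma exists_base [StandardBorelSpace X] (μ : Measure X) [IsProbabilityMeasure μ]
    (T : X ≃ᵐ X)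
    (hap : μ {x : X | ∃ n : ℕ, 1 ≤ n ∧ (⇑T)^[n] x = x} = 0) (N : ℕ) :
    ∃ B : Set X, MeasurableSet B ∧
      (∀ i : ℕ, 1 ≤ i → i < N → ∀ x ∈ B, (⇑T)^[i] x ∉ B) ∧ μ ((sat T B)ᶜ) = 0 := by
  classical
  set P : Set X → Prop := fun E => MeasurableSet E ∧
    ∀ i : ℕ, 1 ≤ i → i < N → ∀ x ∈ E, (⇑T)^[i] x ∉ E with hP
  set sm : Set X → ℝ≥0∞ := fun R => ⨆ (E : Set X) (_ : P E ∧ E ⊆ R), μ (sat T E) with hsm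
  have hsm_le : ∀ R, sm R ≤ 1 := by
    intro R
    exact iSup_le fun E => iSup_le fun _ => prob_le_one
  have hpick : ∀ R : Set X, ∃ E, P E ∧ E ⊆ R ∧ sm R ≤ 2 * μ (sat T E) := by
    intro R
    rcases eq_or_ne (sm R) 0 with h0 | h0
    · exact ⟨∅, ⟨MeasurableSet.empty, by simp⟩, empty_subset _, by simp [h0]⟩
    · have hnt : sm R ≠ ⊤ := ((hsm_le R).trans_lt ENNReal.one_lt_top).ne
      have hlt : sm R / 2 < sm R := ENNReal.half_lt_self h0 hnt
      rw [hsm] at hlt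
      simp only [lt_iSup_iff] at hlt
      obtain ⟨E, hE, hE2⟩ := hlt
      refine ⟨E, hE.1, hE.2, ?_⟩
      calc sm R = sm R / 2 * 2 := (ENNReal.div_mul_cancel (by norm_num) (by norm_num)).symm
        _ ≤ μ (sat T E) * 2 := by exact mul_le_mul_left hE2.le 2
        _ = 2 * μ (sat T E) := mul_comm _ _
  choose pick hpickP hpickSub hpickS using hpick
  set U : ℕ → Set X := fun m => Nat.rec ∅ (fun _ Um => Um ∪ pick (sat T Um)ᶜ) m with hU
  set E : ℕ → Set X := fun m => pick (sat T (U m))ᶜ with hE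
  have hUsucc : ∀ m, U (m + 1) = U m ∪ E m := fun m => rfl
  have hEP : ∀ m, P (E m) := fun m => hpickP _
  have hEsub : ∀ m, E m ⊆ (sat T (U m))ᶜ := fun m => hpickSub _
  have hUmono : ∀ a b, a ≤ b → U a ⊆ U b := by
    intro a b hab
    induction b with
    | zero => simp_all
    | succ b ih =>
      rcases Nat.lt_or_ge a (b + 1) with h | h
      · exact (ih (Nat.lt_succ_iff.1 h)).trans (by rw [hUsucc]; exact subset_union_left)
      · have : a = b + 1 := le_antisymm hab h
        subst this; exact subset_rfl
  have hEU : ∀ m, E m ⊆ U (m + 1) := by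
    intro m; rw [hUsucc]; exact subset_union_right
  refine ⟨⋃ m, E m, MeasurableSet.iUnion fun m => (hEP m).1, ?_, ?_⟩
  · intro i h1 hiN x hx hx'
    obtain ⟨j, hj⟩ := mem_iUnion.1 hx
    obtain ⟨m, hm⟩ := mem_iUnion.1 hx'
    rcases lt_trichotomy j m with h | h | h
    · have h1' : (⇑T)^[i] x ∈ sat T (U m) :=
        sat_mono ((hEU j).trans (hUmono _ _ h)) (mem_sat_of_it hj)
      exact (hEsub m hm) h1'
    · subst h; exact (hEP j).2 i h1 hiN x hj hm
    · have h1' : x ∈ sat T (U j) :=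
        sat_mono ((hEU m).trans (hUmono _ _ h)) (mem_sat_of_it' hm)
      exact (hEsub j hj) h1'
  · by_contra hB0
    have hBm : MeasurableSet (⋃ m, E m) := MeasurableSet.iUnion fun m => (hEP m).1
    obtain ⟨E', hE'm, hE'sub, hE'0, hE'd⟩ :=
      exists_disjointish μ T hap N (measurableSet_sat T hBm).compl hB0
    have hUsubB : ∀ m, U m ⊆ ⋃ k, E k := by
      intro m
      induction m with
      | zero => simp [hU]
      | succ m ih =>
        rw [hUsucc]
        exact union_subset ih (subset_iUnion E m)
    have hc : ∀ m, μ E' ≤ 2 * μ (sat T (E m)) := by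
      intro m
      refine le_trans ?_ (hpickS (sat T (U m))ᶜ)
      have hsub : E' ⊆ (sat T (U m))ᶜ :=
        hE'sub.trans (compl_subset_compl.2 (sat_mono (hUsubB m)))
      calc μ E' ≤ μ (sat T E') := measure_mono subset_sat
        _ ≤ sm (sat T (U m))ᶜ := by
            rw [hsm]
            exact le_iSup₂_of_le E' ⟨⟨hE'm, hE'd⟩, hsub⟩ le_rfl
    have hdis : Pairwise (Disjoint on fun m => sat T (E m)) := by
      have key : ∀ a b : ℕ, a < b → Disjoint (sat T (E a)) (sat T (E b)) := by
        intro a b hab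
        rw [Set.disjoint_left]
        intro z hza hzb
        have h1 : z ∈ (sat T (U b))ᶜ := sat_subset_compl_sat (hEsub b) hzb
        have h2 : z ∈ sat T (U b) :=
          sat_mono ((hEU a).trans (hUmono _ _ hab)) hza
        exact h1 h2
      intro a b hab
      rcases lt_or_gt_of_ne hab with h | h
      · exact key a b h
      · exact (key b a h).symm
    have hsum : ∑' m : ℕ, μ (sat T (E m)) ≤ 1 := by
      rw [← measure_iUnion hdis (fun m => measurableSet_sat T (hEP m).1)]
      exact prob_le_one
    have hpos : μ E' / 2 ≠ 0 := by
      simp only [ne_eq, ENNReal.div_eq_zero_iff, not_or]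
      exact ⟨hE'0, by norm_num⟩
    have htop : (⊤ : ℝ≥0∞) ≤ ∑' m : ℕ, μ (sat T (E m)) := by
      calc (⊤ : ℝ≥0∞) = ∑' _ : ℕ, μ E' / 2 :=
            (ENNReal.tsum_const_eq_top_of_ne_zero hpos).symm
        _ ≤ ∑' m : ℕ, μ (sat T (E m)) := by
            refine ENNReal.tsum_le_tsum fun m => ?_
            rw [ENNReal.div_le_iff_le_mul (by norm_num) (by norm_num)]
            exact (hc m).trans_eq (mul_comm _ _)
    exact absurd (htop.trans hsum) (by simp)

end RokhlinAux


/-- **Rokhlin's lemma.** Let `μ` be a nonatomic Borel probability measure on a standard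
Borel space and `T` an aperiodic `μ`-preserving Borel automorphism. Then for every
`n ≥ 1` and `ε > 0` there is a Borel set `A` with `A, T A, …, T^{n-1} A` pairwise
disjoint and `μ(X \ (A ∪ T A ∪ ⋯ ∪ T^{n-1} A)) < ε`. -/
theorem stmt_9 {X : Type*} [MeasurableSpace X] [StandardBorelSpace X]
    (μ : Measure X) [IsProbabilityMeasure μ] [NullSingletonClass μ]
    (T : X ≃ᵐ X) (hTμ : MeasurePreserving (T : X → X) μ μ)
    (hap : μ {x : X | ∃ n : ℕ, 1 ≤ n ∧ (T : X → X)^[n] x = x} = 0)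
    (n : ℕ) (hn : 1 ≤ n) (ε : ℝ) (hε : 0 < ε) :
    ∃ A : Set X, MeasurableSet A ∧
      (∀ i j : ℕ, i < n → j < n → i ≠ j →
        Disjoint ((T : X → X)^[i] '' A) ((T : X → X)^[j] '' A)) ∧
      μ (Set.univ \ ⋃ i ∈ Finset.range n, (T : X → X)^[i] '' A) < ENNReal.ofReal ε := by
  classical
  obtain ⟨N, hNgt⟩ := exists_nat_gt ((n : ℝ) / ε)
  have hNpos : 0 < (N : ℝ) := lt_trans (by positivity) hNgt
  obtain ⟨B, hBm, hBd, hBsat⟩ := RokhlinAux.exists_base μ T hap N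
  have hTS : MeasurePreserving (⇑T.symm) μ μ := hTμ.symm T
  -- `N * μ B ≤ 1`
  have hNB : (N : ℝ≥0∞) * μ B ≤ 1 := by
    have key : ∀ a b : ℕ, a < b → b < N →
        Disjoint ((⇑T.symm)^[a] ⁻¹' B) ((⇑T.symm)^[b] ⁻¹' B) := by
      intro a b hab hbN
      rw [Set.disjoint_left]
      intro x hxa hxb
      have h1 : (⇑T)^[b - a] ((⇑T.symm)^[b] x) = (⇑T.symm)^[a] x := by
        rw [RokhlinAux.it_symm_it' T (Nat.sub_le b a) x, show b - (b - a) = a by omega]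
      exact hBd (b - a) (by omega) (by omega) _ hxb (h1 ▸ hxa)
    have hdis : (↑(Finset.range N) : Set ℕ).PairwiseDisjoint
        (fun i => (⇑T.symm)^[i] ⁻¹' B) := by
      intro a ha b hb hab
      simp only [Finset.coe_range, mem_Iio] at ha hb
      rcases lt_or_gt_of_ne hab with h | h
      · exact key a b h hb
      · exact (key b a h ha).symm
    have hsum := measure_biUnion_finset (μ := μ) hdis
      (fun b _ => (T.symm.measurable.iterate b) hBm)
    have heach : ∀ i : ℕ, μ ((⇑T.symm)^[i] ⁻¹' B) = μ B := fun i =>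
      (hTS.iterate i).measure_preimage hBm.nullMeasurableSet
    calc (N : ℝ≥0∞) * μ B = ∑ i ∈ Finset.range N, μ ((⇑T.symm)^[i] ⁻¹' B) := by
          simp [heach, Finset.sum_const, nsmul_eq_mul]
      _ = μ (⋃ i ∈ Finset.range N, (⇑T.symm)^[i] ⁻¹' B) := hsum.symm
      _ ≤ 1 := prob_le_one
  have hμB : μ B ≤ (N : ℝ≥0∞)⁻¹ :=
    ENNReal.le_inv_iff_mul_le.2 (le_trans (le_of_eq (mul_comm _ _)) hNB)
  have hfinal : (n : ℝ≥0∞) * μ B < ENNReal.ofReal ε := by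
    calc (n : ℝ≥0∞) * μ B ≤ (n : ℝ≥0∞) * (N : ℝ≥0∞)⁻¹ := mul_le_mul_right hμB _
      _ = ENNReal.ofReal ((n : ℝ) / (N : ℝ)) := by
          rw [ENNReal.ofReal_div_of_pos hNpos, ENNReal.ofReal_natCast,
            ENNReal.ofReal_natCast, div_eq_mul_inv]
      _ < ENNReal.ofReal ε := by
          refine (ENNReal.ofReal_lt_ofReal_iff hε).2 ?_
          rw [div_lt_iff₀ hNpos]
          have h' := (div_lt_iff₀ hε).1 hNgt
          linarith
  -- Poincaré recurrence bad sets
  set ZF : Set X := ⋃ N0 : ℕ, {x | x ∈ B ∧ ∀ m ≥ N0, (⇑T)^[m] x ∉ B} with hZF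
  set ZG : Set X := ⋃ N0 : ℕ, {x | x ∈ B ∧ ∀ m ≥ N0, (⇑T.symm)^[m] x ∉ B} with hZG
  have hZF0 : μ ZF = 0 := measure_iUnion_null fun N0 =>
    hTμ.conservative.measure_mem_forall_ge_image_notMem_eq_zero hBm.nullMeasurableSet N0
  have hZG0 : μ ZG = 0 := measure_iUnion_null fun N0 =>
    hTS.conservative.measure_mem_forall_ge_image_notMem_eq_zero hBm.nullMeasurableSet N0
  have hZ0 : μ (ZF ∪ ZG) = 0 := measure_union_null hZF0 hZG0
  set bad : Set X := (RokhlinAux.sat T B)ᶜ ∪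
    ((⋃ k : ℕ, (⇑T)^[k] ⁻¹' (ZF ∪ ZG)) ∪ (⋃ k : ℕ, (⇑T.symm)^[k] ⁻¹' (ZF ∪ ZG)))
    with hbad
  have hbad0 : μ bad = 0 := by
    refine measure_union_null hBsat (measure_union_null ?_ ?_)
    · exact measure_iUnion_null fun k =>
        (hTμ.iterate k).quasiMeasurePreserving.preimage_null hZ0
    · exact measure_iUnion_null fun k =>
        (hTS.iterate k).quasiMeasurePreserving.preimage_null hZ0
  -- good points have backward and (strict) forward visits to B
  have hgood : ∀ x : X, x ∉ bad →
      (∃ k : ℕ, (⇑T.symm)^[k] x ∈ B) ∧ (∃ k : ℕ, (⇑T)^[k + 1] x ∈ B) := by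
    intro x hx
    rw [hbad] at hx
    have h1 : x ∈ RokhlinAux.sat T B := by
      by_contra h; exact hx (Or.inl h)
    have h2 : ∀ k : ℕ, (⇑T)^[k] x ∉ ZF ∪ ZG := fun k hk =>
      hx (Or.inr (Or.inl (mem_iUnion.2 ⟨k, hk⟩)))
    have h3 : ∀ k : ℕ, (⇑T.symm)^[k] x ∉ ZF ∪ ZG := fun k hk =>
      hx (Or.inr (Or.inr (mem_iUnion.2 ⟨k, hk⟩)))
    have hretF : ∀ (y : X), y ∈ B → y ∉ ZF → ∀ N0 : ℕ, ∃ m ≥ N0, (⇑T)^[m] y ∈ B := by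
      intro y hyB hyZ N0
      by_contra hcon
      push_neg at hcon
      exact hyZ (mem_iUnion.2 ⟨N0, hyB, fun m hm => hcon m hm⟩)
    have hretG : ∀ (y : X), y ∈ B → y ∉ ZG → ∀ N0 : ℕ, ∃ m ≥ N0, (⇑T.symm)^[m] y ∈ B := by
      intro y hyB hyZ N0
      by_contra hcon
      push_neg at hcon
      exact hyZ (mem_iUnion.2 ⟨N0, hyB, fun m hm => hcon m hm⟩)
    obtain ⟨k, hk | hk⟩ := RokhlinAux.mem_sat.1 h1
    · have hyF : (⇑T)^[k] x ∉ ZF := fun h => h2 k (Or.inl h)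
      have hyG : (⇑T)^[k] x ∉ ZG := fun h => h2 k (Or.inr h)
      constructor
      · obtain ⟨m, hm, hmB⟩ := hretG _ hk hyG k
        refine ⟨m - k, ?_⟩
        rw [← RokhlinAux.symm_it_it T hm x]
        exact hmB
      · obtain ⟨m, hm, hmB⟩ := hretF _ hk hyF 1
        refine ⟨m + k - 1, ?_⟩
        rw [show m + k - 1 + 1 = m + k by omega, Function.iterate_add_apply]
        exact hmB
    · have hyF : (⇑T.symm)^[k] x ∉ ZF := fun h => h3 k (Or.inl h)
      refine ⟨⟨k, hk⟩, ?_⟩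
      obtain ⟨m, hm, hmB⟩ := hretF _ hk hyF (k + 1)
      refine ⟨m - k - 1, ?_⟩
      rw [show m - k - 1 + 1 = m - k by omega, ← RokhlinAux.it_symm_it T (by omega) x]
      exact hmB
  -- the Rokhlin base
  set A : Set X := ⋃ (a : ℕ) (_ : a % n = 0) (b : ℕ) (_ : n ≤ b + 1),
    (((⇑T.symm)^[a] ⁻¹' B ∩ ⋂ (c : ℕ) (_ : c < a), ((⇑T.symm)^[c] ⁻¹' B)ᶜ) ∩
     ((⇑T)^[b + 1] ⁻¹' B ∩ ⋂ (c : ℕ) (_ : c < b), ((⇑T)^[c + 1] ⁻¹' B)ᶜ)) with hA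
  have hmemA : ∀ z : X, z ∈ A ↔ ∃ a : ℕ, a % n = 0 ∧ ∃ b : ℕ, n ≤ b + 1 ∧
      (((⇑T.symm)^[a] z ∈ B ∧ ∀ c < a, (⇑T.symm)^[c] z ∉ B) ∧
       ((⇑T)^[b + 1] z ∈ B ∧ ∀ c < b, (⇑T)^[c + 1] z ∉ B)) := by
    intro z
    simp only [hA, mem_iUnion, mem_inter_iff, mem_iInter, mem_preimage, mem_compl_iff]
    tauto
  have hAm : MeasurableSet A := by
    refine MeasurableSet.iUnion fun a => MeasurableSet.iUnion fun _ =>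
      MeasurableSet.iUnion fun b => MeasurableSet.iUnion fun _ =>
      MeasurableSet.inter (MeasurableSet.inter ?_ ?_) (MeasurableSet.inter ?_ ?_)
    · exact (T.symm.measurable.iterate a) hBm
    · exact MeasurableSet.iInter fun c => MeasurableSet.iInter fun _ =>
        ((T.symm.measurable.iterate c) hBm).compl
    · exact (T.measurable.iterate (b + 1)) hBm
    · exact MeasurableSet.iInter fun c => MeasurableSet.iInter fun _ =>
        ((T.measurable.iterate (c + 1)) hBm).compl
  -- disjointness of the tower levels
  have hdisj : ∀ i j : ℕ, i < j → j < n → Disjoint ((⇑T)^[i] '' A) ((⇑T)^[j] '' A) := by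
    intro i j hij hjn
    rw [Set.disjoint_left]
    rintro z ⟨x, hxA, hxz⟩ ⟨y, hyA, hyz⟩
    have hxy : x = (⇑T)^[j - i] y := by
      have h := congrArg (⇑T.symm)^[i] (hxz.trans hyz.symm)
      rwa [RokhlinAux.symm_it T i x, RokhlinAux.symm_it_it' T (le_of_lt hij) y] at h
    set d := j - i with hd
    have hd1 : 1 ≤ d := by omega
    have hdn : d < n := by omega
    have hyx : y = (⇑T.symm)^[d] x := by rw [hxy, RokhlinAux.symm_it T d y]
    obtain ⟨a, han, b, hbn, ⟨haB, hamin⟩, hfB, hfmin⟩ := (hmemA x).1 hxA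
    obtain ⟨a', han', b', hbn', ⟨haB', hamin'⟩, hfB', hfmin'⟩ := (hmemA y).1 hyA
    have hrel : ∀ c : ℕ, (⇑T.symm)^[c] y = (⇑T.symm)^[c + d] x := by
      intro c; rw [hyx, ← Function.iterate_add_apply]
    rcases le_or_gt d a with hda | hda
    · have h1 : a ≤ a' + d := by
        by_contra hcon
        push_neg at hcon
        exact hamin _ hcon (by rw [← hrel]; exact haB')
      have h2 : a' ≤ a - d := by
        by_contra hcon
        push_neg at hcon
        refine hamin' _ hcon ?_
        rw [hrel, Nat.sub_add_cancel hda]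
        exact haB
      have hdvd : n ∣ d := by
        have hna : n ∣ a := Nat.dvd_of_mod_eq_zero han
        have hna' : n ∣ a' := Nat.dvd_of_mod_eq_zero han'
        have hsub : d = a - a' := by omega
        rw [hsub]; exact Nat.dvd_sub hna hna'
      exact absurd (Nat.le_of_dvd (by omega) hdvd) (by omega)
    · have ha0 : a = 0 := by
        have hdv := Nat.dvd_of_mod_eq_zero han
        rcases Nat.eq_zero_or_pos a with h | h
        · exact h
        · exact absurd (Nat.le_of_dvd h hdv) (by omega)
      have hxB : x ∈ B := by simpa [ha0] using haB
      have hdy : (⇑T)^[d] y ∈ B := by rw [hyx, RokhlinAux.it_symm T d x]; exact hxB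
      have hble : ¬ (d - 1 < b') := by
        intro hcon
        refine hfmin' _ hcon ?_
        rw [show d - 1 + 1 = d by omega]
        exact hdy
      omega
  -- coverage
  have hcov : ∀ x : X, x ∉ bad → (∀ t : ℕ, 1 ≤ t → t < n → (⇑T)^[t] x ∉ B) →
      x ∈ ⋃ i ∈ Finset.range n, (⇑T)^[i] '' A := by
    intro x hxb hno
    obtain ⟨hb, hf0⟩ := hgood x hxb
    set a := Nat.find hb with haa
    have haB : (⇑T.symm)^[a] x ∈ B := Nat.find_spec hb
    have hamin : ∀ c, c < a → (⇑T.symm)^[c] x ∉ B := fun c hc => Nat.find_min hb hc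
    set i := a % n with hi
    have hin : i < n := Nat.mod_lt _ (by omega)
    have hia : i ≤ a := Nat.mod_le a n
    set y := (⇑T.symm)^[i] x with hy
    have hxy : x = (⇑T)^[i] y := (RokhlinAux.it_symm T i x).symm
    have hfy : ∃ k : ℕ, (⇑T)^[k + 1] y ∈ B := by
      obtain ⟨k0, hk0⟩ := hf0
      refine ⟨k0 + i, ?_⟩
      rw [show k0 + i + 1 = (k0 + 1) + i by omega, Function.iterate_add_apply, ← hxy]
      exact hk0
    set b := Nat.find hfy with hbb
    have hfyB : (⇑T)^[b + 1] y ∈ B := Nat.find_spec hfy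
    have hfymin : ∀ c, c < b → (⇑T)^[c + 1] y ∉ B := fun c hc => Nat.find_min hfy hc
    have hnb : n ≤ b + 1 := by
      by_contra hcon
      push_neg at hcon
      rcases le_or_gt i (b + 1) with hle | hlt
      · have heq : (⇑T)^[b + 1] y = (⇑T)^[b + 1 - i] x := by
          rw [hy, RokhlinAux.it_symm_it T hle x]
        rcases Nat.eq_zero_or_pos (b + 1 - i) with h0 | hpos
        · have hxx : (⇑T)^[b + 1] y = x := by rw [heq, h0, Function.iterate_zero_apply]
          have hxB : x ∈ B := hxx ▸ hfyB
          exact hamin 0 (by omega) (by simpa using hxB)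
        · exact hno _ hpos (by omega) (heq ▸ hfyB)
      · have heq : (⇑T)^[b + 1] y = (⇑T.symm)^[i - (b + 1)] x := by
          rw [hy, RokhlinAux.it_symm_it' T (le_of_lt hlt) x]
        exact hamin _ (by omega) (heq ▸ hfyB)
    have hyA : y ∈ A := by
      refine (hmemA y).2 ⟨a - i, ?_, b, hnb, ⟨⟨?_, ?_⟩, hfyB, fun c hc => hfymin c hc⟩⟩
      · have hdm := Nat.div_add_mod a n
        have hsub : a - i = n * (a / n) := by omega
        rw [hsub, Nat.mul_mod_right]
      · rw [hy, ← Function.iterate_add_apply, show a - i + i = a by omega]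
        exact haB
      · intro c hc
        rw [hy, ← Function.iterate_add_apply]
        exact hamin _ (by omega)
    exact mem_iUnion₂.2 ⟨i, Finset.mem_range.2 hin, ⟨y, hyA, hxy.symm⟩⟩
  refine ⟨A, hAm, ?_, ?_⟩
  · intro i j hi hj hij
    rcases lt_or_gt_of_ne hij with h | h
    · exact hdisj i j h hj
    · exact (hdisj j i h hi).symm
  · have hsub : Set.univ \ (⋃ i ∈ Finset.range n, (⇑T)^[i] '' A) ⊆
        bad ∪ ⋃ t ∈ Finset.Ico 1 n, (⇑T)^[t] ⁻¹' B := by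
      intro x hx
      by_cases hxb : x ∈ bad
      · exact Or.inl hxb
      by_cases hvisit : ∀ t : ℕ, 1 ≤ t → t < n → (⇑T)^[t] x ∉ B
      · exact absurd (hcov x hxb hvisit) hx.2
      · push_neg at hvisit
        obtain ⟨t, h1, h2, h3⟩ := hvisit
        exact Or.inr (mem_iUnion₂.2 ⟨t, Finset.mem_Ico.2 ⟨h1, h2⟩, h3⟩)
    calc μ (Set.univ \ ⋃ i ∈ Finset.range n, (⇑T)^[i] '' A)
        ≤ μ (bad ∪ ⋃ t ∈ Finset.Ico 1 n, (⇑T)^[t] ⁻¹' B) := measure_mono hsub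
      _ ≤ μ bad + μ (⋃ t ∈ Finset.Ico 1 n, (⇑T)^[t] ⁻¹' B) := measure_union_le _ _
      _ = μ (⋃ t ∈ Finset.Ico 1 n, (⇑T)^[t] ⁻¹' B) := by rw [hbad0, zero_add]
      _ ≤ ∑ t ∈ Finset.Ico 1 n, μ ((⇑T)^[t] ⁻¹' B) := measure_biUnion_finset_le _ _
      _ = ∑ t ∈ Finset.Ico 1 n, μ B := Finset.sum_congr rfl fun t _ =>
          (hTμ.iterate t).measure_preimage hBm.nullMeasurableSet
      _ ≤ (n : ℝ≥0∞) * μ B := by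
          rw [Finset.sum_const, Nat.card_Ico, nsmul_eq_mul]
          exact mul_le_mul_left (by exact_mod_cast Nat.sub_le n 1) _
      _ < ENNReal.ofReal ε := hfinal
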